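/- Let R' be an R-cross-section of IS_m ≀_p IS_n and set R'_1 = {a ∈ IS_n : (f,a) ∈ R' for some f}. Then R'_1 is an R-cross-section of IS_n; moreover, writing e' = (0̄, 1) for the element with identity second component and first component constantly the empty map, one has e'R' = {(0̄|_{dom(a)}, a) : a ∈ R'_1}, and for any semigroup isomorphism φ: R' → R'' of R-cross-sections of IS_m ≀_p IS_n, the map φ_1: R'_1 → R''_1 determined by (0̄|_{dom(φ_1(a))}, φ_1(a)) = φ((0̄|_{dom(a)}, a)) is a semigroup isomorphism. -/

import Mathlib

open scoped Classical

/-- `IS n` is the full inverse symmetric semigroup: all partial bijections of `Fin n`;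
multiplication is composition of partial maps (maps acting on the right). -/
abbrev IS (n : ℕ) : Type := PEquiv (Fin n) (Fin n)

noncomputable section
namespace ISW

instance {n : ℕ} : Mul (IS n) := ⟨PEquiv.trans⟩
instance {n : ℕ} : One (IS n) := ⟨PEquiv.refl _⟩

/-- The domain of a partial bijection. -/
def pdom {n : ℕ} (f : IS n) : Set (Fin n) := {x | (f x).isSome}

/-- The range of a partial bijection. -/
def pran {n : ℕ} (f : IS n) : Set (Fin n) := {y | (f.symm y).isSome}

/-- Green's R-relation on a semigroup (with identity): `u R v` iff `uS = vS`. -/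
def GreenR {S : Type*} [Mul S] (u v : S) : Prop :=
  {w | ∃ s, w = u * s} = {w | ∃ s, w = v * s}

/-- Green's L-relation on a semigroup (with identity): `u L v` iff `Su = Sv`. -/
def GreenL {S : Type*} [Mul S] (u v : S) : Prop :=
  {w | ∃ s, w = s * u} = {w | ∃ s, w = s * v}

/-- An R-cross-section: a subsemigroup containing exactly one element of every
Green R-class. -/
def IsRCrossSection {S : Type*} [Mul S] (T : Set S) : Prop :=
  (∀ a ∈ T, ∀ b ∈ T, a * b ∈ T) ∧ ∀ x : S, ∃! t, t ∈ T ∧ GreenR x t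

/-- An L-cross-section: a subsemigroup containing exactly one element of every
Green L-class. -/
def IsLCrossSection {S : Type*} [Mul S] (T : Set S) : Prop :=
  (∀ a ∈ T, ∀ b ∈ T, a * b ∈ T) ∧ ∀ x : S, ∃! t, t ∈ T ∧ GreenL x t

/-- `φ` realizes a semigroup isomorphism from `T₁` onto `T₂`. -/
def IsSemiIso {S₁ S₂ : Type*} [Mul S₁] [Mul S₂] (T₁ : Set S₁) (T₂ : Set S₂)
    (φ : S₁ → S₂) : Prop :=
  Set.BijOn φ T₁ T₂ ∧ ∀ a ∈ T₁, ∀ b ∈ T₁, φ (a * b) = φ a * φ b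

/-- The partial wreath product `IS m ≀_p IS n`: pairs `(f, a)` with `a ∈ IS n` and
`f` a partial map from `Fin n` to `IS m` whose domain equals the domain of `a`. -/
structure PW (m n : ℕ) where
  base : IS n
  fib : Fin n → Option (IS m)
  dom_eq : ∀ x, (fib x).isSome ↔ (base x).isSome

/-- Multiplication of the partial wreath product: `(f,a)·(g,b) = (f g^a, ab)`. -/
instance {m n : ℕ} : Mul (PW m n) where
  mul u v :=
    { base := u.base * v.base
      fib := fun x => Option.map₂ (· * ·) (u.fib x) ((u.base x).bind v.fib)
      dom_eq := by
        intro x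
        show _ ↔ (((u.base x).bind v.base)).isSome
        cases h : u.base x with
        | none =>
          have : u.fib x = none := by
            have := (u.dom_eq x)
            simp [h] at this
            simpa using Option.not_isSome_iff_eq_none.mp (by simp [this])
          simp [h, this, Option.map₂]
        | some y =>
          have hf : (u.fib x).isSome := (u.dom_eq x).mpr (by simp [h])
          obtain ⟨s, hs⟩ := Option.isSome_iff_exists.mp hf
          cases h2 : v.base y with
          | none =>
            have : v.fib y = none := by
              have := (v.dom_eq y)
              simp [h2] at this
              simpa using Option.not_isSome_iff_eq_none.mp (by simp [this])
            simp [h, h2, hs, this, Option.map₂]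
          | some z =>
            have hg : (v.fib y).isSome := (v.dom_eq y).mpr (by simp [h2])
            obtain ⟨t, ht⟩ := Option.isSome_iff_exists.mp hg
            simp [h, h2, hs, ht, Option.map₂] }

/-- The identity of the partial wreath product. -/
instance {m n : ℕ} : One (PW m n) where
  one :=
    { base := 1
      fib := fun _ => some 1
      dom_eq := by intro x; simp; rfl }

/-- `chainFun L j x`: with `L` listing the elements of a block in increasing order and
`0 ≤ j < |L|` (`j` is the 0-based version of the paper's index), this is the value at `x` of
the chain `a_{i,j}`: the partial bijection with domain everything except `L[j]`,
sending `L[l] ↦ L[l+1]` for `l < j` and fixing all other points. -/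
def chainFun {n : ℕ} (L : List (Fin n)) (j : ℕ) (x : Fin n) : Option (Fin n) :=
  if x ∈ L then
    if L.idxOf x = j then none
    else if L.idxOf x < j then L[L.idxOf x + 1]?
    else some x
  else some x

/-- The generators `a_{i,j}` attached to an ordered decomposition with blocks `B i`. -/
def RGens {n s : ℕ} (B : Fin s → List (Fin n)) : Set (IS n) :=
  {a : IS n | ∃ i : Fin s, ∃ j : ℕ, j < (B i).length ∧ ∀ x, a x = chainFun (B i) j x}

/-- `R(M⃗₁, …, M⃗ₛ)`: the subsemigroup of `IS n` generated by the chains `a_{i,j}`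
together with the identity map. -/
def RSec {n s : ℕ} (B : Fin s → List (Fin n)) : Set (IS n) :=
  (Subsemigroup.closure (RGens B ∪ {1}) : Subsemigroup (IS n))

/-- A decomposition of `Fin n` into disjoint nonempty blocks, each block equipped with
a linear order, recorded by listing the elements of each block in increasing order. -/
structure OrderedPartition (n s : ℕ) where
  B : Fin s → List (Fin n)
  nonempty : ∀ i, B i ≠ []
  nodup : ∀ i, (B i).Nodup
  disjoint : ∀ i j, i ≠ j → ∀ x, x ∈ B i → x ∉ B j
  cover : ∀ x, ∃ i, x ∈ B i

/-- The chain `a_{i,j}` of the block listed by `L`, viewed inside `IS(M_i)`, i.e. embedded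
into `IS n` as a partial bijection whose domain is contained in the block: it is defined on
`L` minus `L[j]`, sends `L[l] ↦ L[l+1]` for `l < j` and fixes the other points of `L`. -/
def chainFunB {n : ℕ} (L : List (Fin n)) (j : ℕ) (x : Fin n) : Option (Fin n) :=
  if x ∈ L then
    if L.idxOf x = j then none
    else if L.idxOf x < j then L[L.idxOf x + 1]?
    else some x
  else none

/-- The generators of `R(M⃗)` inside `IS(M)` (embedded in `IS n`), `M` listed by `L`. -/
def BlockGens {n : ℕ} (L : List (Fin n)) : Set (IS n) :=
  {a : IS n | ∃ j : ℕ, j < L.length ∧ ∀ x, a x = chainFunB L j x}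

/-- The identity of `IS(M)` (embedded in `IS n`): the identity map of the block listed by `L`. -/
def idOn {n : ℕ} (L : List (Fin n)) : Set (IS n) :=
  {a : IS n | ∀ x, a x = if x ∈ L then some x else none}

/-- The R-cross-section `R(M⃗)` of `IS(M)`, embedded into `IS n`, for the block listed by `L`. -/
def RSecBlock {n : ℕ} (L : List (Fin n)) : Set (IS n) :=
  (Subsemigroup.closure (BlockGens L ∪ idOn L) : Subsemigroup (IS n))

/-- The wreath product `R_i ≀_p R(M⃗_i)` where `R(M⃗_i) ⊆ IS(M_i)`, `M_i` listed by `L`,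
and `R_i = T ⊆ IS m`, realized inside `PW m n` via the natural embedding
`IS m ≀_p IS(M_i) ⊆ IS m ≀_p IS n`. -/
def WBlock (m n : ℕ) (L : List (Fin n)) (T : Set (IS m)) : Set (PW m n) :=
  {u : PW m n | u.base ∈ RSecBlock L ∧ ∀ x f, u.fib x = some f → f ∈ T}

/-- The element `e' = (0̄, 1)` of `IS m ≀_p IS n`: the second component is the identity of
`IS n` and the first component sends every point to the empty map `0` of `IS m`. -/
def ezero (m n : ℕ) : PW m n where
  base := 1
  fib := fun _ => some ⊥
  dom_eq := by intro x; simp; rfl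


/-! ### Auxiliary development for Statement 17 -/

section Aux

variable {m n k : ℕ}

/-! #### Basic lemmas about `IS` -/

lemma is_mul_apply (a b : IS k) (x : Fin k) : (a * b) x = (a x).bind b := rfl

lemma is_one_apply (x : Fin k) : (1 : IS k) x = some x := rfl

lemma is_mul_assoc (a b c : IS k) : a * b * c = a * (b * c) := PEquiv.trans_assoc a b c

lemma is_mul_one (a : IS k) : a * 1 = a := PEquiv.trans_refl a

lemma is_one_mul (a : IS k) : 1 * a = a := PEquiv.refl_trans a

lemma is_bot_mul (a : IS k) : (⊥ : IS k) * a = ⊥ := PEquiv.bot_trans a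

lemma mem_pdom {a : IS k} {x : Fin k} : x ∈ pdom a ↔ (a x).isSome := Iff.rfl

lemma pdom_bot : pdom (⊥ : IS k) = ∅ := by
  ext x; simp [pdom, PEquiv.bot_apply]

lemma pdom_empty_eq_bot {a : IS k} (h : pdom a = (∅ : Set (Fin k))) : a = ⊥ := by
  refine PEquiv.ext fun x => ?_
  have hx : x ∉ pdom a := by rw [h]; exact Set.notMem_empty x
  have hax : a x = none := Option.not_isSome_iff_eq_none.mp hx
  simp [hax, PEquiv.bot_apply]

lemma is_idem_fix {a : IS k} (h : a * a = a) {x y : Fin k} (hxy : a x = some y) : y = x := by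
  have h2 : (a * a) x = a x := by rw [h]
  rw [is_mul_apply, hxy] at h2
  rw [Option.bind_some] at h2
  have h3 : a.symm y = some y := a.eq_some_iff.mpr h2
  have h4 : a.symm y = some x := a.eq_some_iff.mpr hxy
  rw [h3] at h4
  exact Option.some_injective _ h4

lemma is_idem_apply {a : IS k} (h : a * a = a) (x : Fin k) :
    a x = none ∨ a x = some x := by
  cases hx : a x with
  | none => exact Or.inl rfl
  | some y =>
    have := is_idem_fix h hx
    subst this
    exact Or.inr rfl

lemma pdom_mul_subset (a b : IS k) : pdom (a * b) ⊆ pdom a := by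
  intro x hx
  rw [mem_pdom, is_mul_apply] at hx
  rw [mem_pdom]
  cases h : a x with
  | none => rw [h] at hx; simp at hx
  | some y => simp

lemma is_idem_mul_eq {s f : IS k} (hs : s * s = s) (hsub : pdom f ⊆ pdom s) : s * f = f := by
  refine PEquiv.ext fun p => ?_
  rw [is_mul_apply]
  rcases is_idem_apply hs p with h | h
  · rw [h, Option.bind_none]
    symm
    have hp : p ∉ pdom s := by rw [mem_pdom, h]; simp
    have : p ∉ pdom f := fun hpf => hp (hsub hpf)
    exact Option.not_isSome_iff_eq_none.mp this
  · rw [h, Option.bind_some]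

lemma is_factor {a b : IS k} (h : pdom a = pdom b) : a * (a.symm.trans b) = b := by
  refine PEquiv.ext fun x => ?_
  rw [is_mul_apply]
  cases ha : a x with
  | none =>
    have hx : x ∉ pdom a := by rw [mem_pdom, ha]; simp
    rw [h] at hx
    have hb : b x = none := Option.not_isSome_iff_eq_none.mp hx
    simp [hb]
  | some y =>
    have hxy : a.symm y = some x := a.eq_some_iff.mpr ha
    rw [Option.bind_some]
    show (a.symm y).bind b = b x
    rw [hxy, Option.bind_some]

/-! #### Green's ℛ relation, generically -/

lemma greenR_refl {S : Type*} [Mul S] (u : S) : GreenR u u := rfl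

lemma greenR_iff_factors {S : Type*} [Mul S]
    (assoc : ∀ a b c : S, a * b * c = a * (b * c)) (e : S) (he : ∀ a : S, a * e = a)
    {u v : S} : GreenR u v ↔ (∃ s, u = v * s) ∧ (∃ s, v = u * s) := by
  constructor
  · intro h
    have h' := Set.ext_iff.mp h
    exact ⟨(h' u).mp ⟨e, (he u).symm⟩, (h' v).mpr ⟨e, (he v).symm⟩⟩
  · rintro ⟨⟨s, hs⟩, ⟨t, ht⟩⟩
    apply Set.ext
    intro w
    simp only [Set.mem_setOf_eq]
    constructor
    · rintro ⟨r, rfl⟩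
      exact ⟨s * r, by rw [hs, assoc]⟩
    · rintro ⟨r, rfl⟩
      exact ⟨t * r, by rw [ht, assoc]⟩

lemma is_greenR_iff {a b : IS k} : GreenR a b ↔ pdom a = pdom b := by
  rw [greenR_iff_factors is_mul_assoc 1 is_mul_one]
  constructor
  · rintro ⟨⟨s, hs⟩, ⟨t, ht⟩⟩
    apply Set.Subset.antisymm
    · rw [hs]; exact pdom_mul_subset b s
    · rw [ht]; exact pdom_mul_subset a t
  · intro h
    exact ⟨⟨b.symm.trans a, (is_factor h.symm).symm⟩, ⟨a.symm.trans b, (is_factor h).symm⟩⟩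

/-! #### Basic lemmas about `PW` -/

lemma PW.ext' {u v : PW m n} (hb : u.base = v.base) (hf : u.fib = v.fib) : u = v := by
  cases u; cases v
  cases hb; cases hf
  rfl

lemma pw_mul_base (u v : PW m n) : (u * v).base = u.base * v.base := rfl

lemma pw_mul_fib (u v : PW m n) (x : Fin n) :
    (u * v).fib x = Option.map₂ (· * ·) (u.fib x) ((u.base x).bind v.fib) := rfl

lemma pw_one_base : (1 : PW m n).base = 1 := rfl

lemma pw_one_fib (x : Fin n) : (1 : PW m n).fib x = some 1 := rfl

lemma fib_none_iff {u : PW m n} {x : Fin n} : u.fib x = none ↔ u.base x = none := by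
  rw [← Option.not_isSome_iff_eq_none, ← Option.not_isSome_iff_eq_none, u.dom_eq x]

lemma pw_one_mul (u : PW m n) : 1 * u = u := by
  refine PW.ext' (is_one_mul _) ?_
  funext x
  show Option.map₂ (· * ·) (some 1) (((1 : IS n) x).bind u.fib) = u.fib x
  rw [is_one_apply, Option.bind_some]
  cases hf : u.fib x with
  | none => rfl
  | some f => simp [Option.map₂, is_one_mul]

lemma pw_mul_one (u : PW m n) : u * 1 = u := by
  refine PW.ext' (is_mul_one _) ?_
  funext x
  show Option.map₂ (· * ·) (u.fib x) ((u.base x).bind fun _ => some 1) = u.fib x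
  cases hb : u.base x with
  | none =>
    rw [fib_none_iff.mpr hb]
    rfl
  | some y =>
    rw [Option.bind_some]
    cases hf : u.fib x with
    | none => rfl
    | some f => simp [Option.map₂, is_mul_one]

lemma pw_mul_assoc (u v w : PW m n) : u * v * w = u * (v * w) := by
  refine PW.ext' (is_mul_assoc _ _ _) ?_
  funext x
  show Option.map₂ (· * ·) ((u * v).fib x) (((u.base * v.base) x).bind w.fib)
      = Option.map₂ (· * ·) (u.fib x) ((u.base x).bind (v * w).fib)
  rw [pw_mul_fib, is_mul_apply]
  cases ha : u.base x with
  | none =>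
    rw [fib_none_iff.mpr ha]
    simp [Option.map₂]
  | some y =>
    simp only [Option.bind_some]
    rw [pw_mul_fib]
    cases hf : u.fib x with
    | none => simp [Option.map₂]
    | some f =>
      cases hg : v.fib y with
      | none =>
        rw [fib_none_iff.mp hg]
        simp [Option.map₂]
      | some g =>
        cases hh : (v.base y).bind w.fib with
        | none => simp [Option.map₂]
        | some h => simp [Option.map₂, is_mul_assoc]

/-! #### The ℛ-class data of an element of `PW` -/

/-- The data determining the ℛ-class of `u`: the domains of the fiber components (whose
someness pattern also records the domain of the base). -/
def rdata (u : PW m n) (x : Fin n) : Option (Set (Fin m)) := (u.fib x).map pdom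

lemma rdata_eq_none {u : PW m n} {x : Fin n} : rdata u x = none ↔ u.fib x = none := by
  simp [rdata]

lemma rdata_eq_some {u : PW m n} {x : Fin n} {S : Set (Fin m)} :
    rdata u x = some S ↔ ∃ f, u.fib x = some f ∧ pdom f = S := by
  simp [rdata]

lemma rdata_base_isSome {u v : PW m n} (h : rdata u = rdata v) (x : Fin n) :
    (u.base x).isSome ↔ (v.base x).isSome := by
  rw [← u.dom_eq x, ← v.dom_eq x]
  have hx := congrFun h x
  cases hu : u.fib x <;> cases hv : v.fib x <;> simp [rdata, hu, hv] at hx ⊢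

lemma rdata_factor {u v s : PW m n} (h : v = u * s) (x : Fin n) :
    v.fib x = none ∨ ∃ f g, u.fib x = some f ∧ v.fib x = some g ∧ pdom g ⊆ pdom f := by
  subst h
  rw [pw_mul_fib]
  cases hf : u.fib x with
  | none => exact Or.inl rfl
  | some f =>
    cases hy : (u.base x).bind s.fib with
    | none => exact Or.inl (by simp [Option.map₂])
    | some g2 =>
      right
      exact ⟨f, f * g2, rfl, by simp [Option.map₂], pdom_mul_subset f g2⟩

/-- The canonical element realizing `GreenR u v` from equality of ℛ-class data. -/
def pwSolve (u v : PW m n) : PW m n where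
  base := u.base.symm.trans v.base
  fib := fun y => (u.base.symm y).bind fun x =>
    Option.map₂ (fun f g => f.symm.trans g) (u.fib x) (v.fib x)
  dom_eq := by
    intro y
    show ((u.base.symm y).bind fun x =>
        Option.map₂ (fun f g => f.symm.trans g) (u.fib x) (v.fib x)).isSome
      ↔ ((u.base.symm y).bind v.base).isSome
    cases hx : u.base.symm y with
    | none => exact Iff.rfl
    | some x =>
      rw [Option.bind_some, Option.bind_some]
      have hb : (u.base x).isSome := by
        rw [u.base.eq_some_iff.mp hx]; rfl
      have hf : (u.fib x).isSome := (u.dom_eq x).mpr hb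
      obtain ⟨f, hf⟩ := Option.isSome_iff_exists.mp hf
      rw [hf]
      cases hg : v.fib x with
      | none =>
        rw [fib_none_iff.mp hg]
        simp [Option.map₂]
      | some g =>
        have hvb : (v.base x).isSome := (v.dom_eq x).mp (by rw [hg]; rfl)
        obtain ⟨w, hw⟩ := Option.isSome_iff_exists.mp hvb
        rw [hw]
        simp [Option.map₂]

lemma pw_solve_spec {u v : PW m n} (h : rdata u = rdata v) : u * pwSolve u v = v := by
  have hsome : ∀ x, (u.fib x).isSome ↔ (v.fib x).isSome := by
    intro x
    have hx := congrFun h x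
    cases hu : u.fib x <;> cases hv : v.fib x <;> simp [rdata, hu, hv] at hx ⊢
  have hpd : ∀ x f g, u.fib x = some f → v.fib x = some g → pdom f = pdom g := by
    intro x f g hf hg
    have hx := congrFun h x
    rw [rdata, rdata, hf, hg] at hx
    simpa using hx
  have hbase : pdom u.base = pdom v.base := by
    ext x
    rw [mem_pdom, mem_pdom, ← u.dom_eq x, ← v.dom_eq x]
    exact hsome x
  refine PW.ext' ?_ ?_
  · exact is_factor hbase
  · funext x
    rw [pw_mul_fib]
    cases hb : u.base x with
    | none =>
      rw [fib_none_iff.mpr hb, Option.map₂_none_left]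
      symm
      rw [fib_none_iff]
      have : x ∉ pdom u.base := by rw [mem_pdom, hb]; simp
      rw [hbase] at this
      exact Option.not_isSome_iff_eq_none.mp this
    | some y =>
      rw [Option.bind_some]
      have hsx : u.base.symm y = some x := u.base.eq_some_iff.mpr hb
      show Option.map₂ (· * ·) (u.fib x)
        ((u.base.symm y).bind fun x' =>
          Option.map₂ (fun f g => f.symm.trans g) (u.fib x') (v.fib x')) = v.fib x
      rw [hsx, Option.bind_some]
      have hfs : (u.fib x).isSome := (u.dom_eq x).mpr (by rw [hb]; rfl)
      obtain ⟨f, hf⟩ := Option.isSome_iff_exists.mp hfs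
      have hgs : (v.fib x).isSome := (hsome x).mp hfs
      obtain ⟨g, hg⟩ := Option.isSome_iff_exists.mp hgs
      rw [hf, hg]
      simp only [Option.map₂, Option.bind_some, Option.map_some]
      show some (f * (f.symm.trans g)) = some g
      rw [is_factor (hpd x f g hf hg)]

lemma pw_greenR_iff {u v : PW m n} : GreenR u v ↔ rdata u = rdata v := by
  rw [greenR_iff_factors pw_mul_assoc 1 pw_mul_one]
  constructor
  · rintro ⟨⟨s, hs⟩, ⟨t, ht⟩⟩
    funext x
    rcases rdata_factor hs x with h1 | ⟨f, g, hf, hg, hsub⟩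
    · rcases rdata_factor ht x with h2 | ⟨f', g', hf', hg', _⟩
      · rw [rdata_eq_none.mpr h1, rdata_eq_none.mpr h2]
      · rw [hf'] at h1; cases h1
    · rcases rdata_factor ht x with h2 | ⟨f', g', hf', hg', hsub'⟩
      · rw [hf] at h2; cases h2
      · rw [hg] at hf'
        rw [hg'] at hf
        cases hf'
        cases hf
        show (u.fib x).map pdom = (v.fib x).map pdom
        simp [hg, hg', Set.Subset.antisymm hsub hsub']
  · intro h
    exact ⟨⟨pwSolve v u, (pw_solve_spec h.symm).symm⟩, ⟨pwSolve u v, (pw_solve_spec h).symm⟩⟩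

/-! #### Canonical elements -/

/-- Partial identity on a set. -/
def pid (s : Set (Fin k)) : IS k := PEquiv.ofSet s

lemma pid_apply (s : Set (Fin k)) (x : Fin k) :
    pid s x = if x ∈ s then some x else none := rfl

lemma pdom_pid (s : Set (Fin k)) : pdom (pid s) = s := by
  ext x
  by_cases hx : x ∈ s <;> simp [mem_pdom, pid_apply, hx]

/-- The zero-fibered element with a given base. -/
def zmk (a : IS n) : PW m n where
  base := a
  fib := fun x => if (a x).isSome then some ⊥ else none
  dom_eq := by
    intro x
    by_cases h : (a x).isSome <;> simp [h]

lemma zmk_base (a : IS n) : (zmk a : PW m n).base = a := rfl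

lemma zmk_fib (a : IS n) (x : Fin n) :
    (zmk a : PW m n).fib x = if (a x).isSome then some ⊥ else none := rfl

lemma ezero_mul (u : PW m n) : ezero m n * u = zmk u.base := by
  refine PW.ext' (is_one_mul _) ?_
  funext x
  show Option.map₂ (· * ·) (some ⊥) (((1 : IS n) x).bind u.fib)
      = (zmk u.base : PW m n).fib x
  rw [is_one_apply, Option.bind_some, zmk_fib]
  cases hf : u.fib x with
  | none =>
    rw [fib_none_iff.mp hf]
    simp [Option.map₂]
  | some f =>
    have hb : (u.base x).isSome := (u.dom_eq x).mp (by rw [hf]; rfl)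
    simp [Option.map₂, hb, is_bot_mul]

lemma zmk_one : (zmk (1 : IS n) : PW m n) = ezero m n := by
  refine PW.ext' rfl ?_
  funext x
  rw [zmk_fib, is_one_apply]
  rfl

lemma ezero_idem : ezero m n * ezero m n = ezero m n := by
  rw [ezero_mul]
  exact zmk_one

lemma zmk_mul_zmk (a b : IS n) : (zmk a : PW m n) * zmk b = zmk (a * b) := by
  refine PW.ext' rfl ?_
  funext x
  rw [pw_mul_fib, zmk_base]
  cases ha : a x with
  | none =>
    have h1 : ((zmk a : PW m n)).fib x = none := by rw [zmk_fib, ha]; rfl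
    rw [h1, Option.map₂_none_left, zmk_fib]
    have hab : (a * b) x = none := by rw [is_mul_apply, ha]; rfl
    rw [hab]
    rfl
  | some y =>
    have h1 : ((zmk a : PW m n)).fib x = some ⊥ := by rw [zmk_fib, ha]; rfl
    rw [h1, Option.bind_some, zmk_fib, zmk_fib]
    have hab : (a * b) x = b y := by rw [is_mul_apply, ha, Option.bind_some]
    rw [hab]
    by_cases hb : (b y).isSome
    · rw [if_pos hb]
      simp [Option.map₂, is_bot_mul]
    · rw [if_neg hb]
      simp [Option.map₂]

lemma rdata_zmk (a : IS n) (x : Fin n) :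
    rdata (zmk a : PW m n) x = if (a x).isSome then some (∅ : Set (Fin m)) else none := by
  rw [rdata, zmk_fib]
  by_cases h : (a x).isSome <;> simp [h, pdom_bot]

lemma rdata_ezero (x : Fin n) : rdata (ezero m n) x = some (∅ : Set (Fin m)) := by
  simp [rdata, ezero, pdom_bot]

lemma efix_iff {u : PW m n} :
    ezero m n * u = u ↔ ∀ x, u.fib x = if (u.base x).isSome then some ⊥ else none := by
  rw [ezero_mul]
  constructor
  · intro h x
    conv_lhs => rw [← h]
    rfl
  · intro h
    refine PW.ext' rfl ?_
    funext x
    rw [h x]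
    rfl

/-! #### Cross-section lemmas -/

lemma cs_unique {T : Set (PW m n)} (hT : IsRCrossSection T) {u v : PW m n}
    (hu : u ∈ T) (hv : v ∈ T) (h : GreenR u v) : u = v := by
  obtain ⟨t, _, hun⟩ := hT.2 u
  rw [hun u ⟨hu, greenR_refl u⟩, hun v ⟨hv, h⟩]

lemma cs_rep {T : Set (PW m n)} (hT : IsRCrossSection T) (w : PW m n) :
    ∃ t ∈ T, rdata t = rdata w := by
  obtain ⟨t, ⟨ht, hg⟩, -⟩ := hT.2 w
  exact ⟨t, ht, (pw_greenR_iff.mp hg).symm⟩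

lemma ezero_mem {T : Set (PW m n)} (hT : IsRCrossSection T) : ezero m n ∈ T := by
  obtain ⟨t, ⟨ht, hg⟩, hun⟩ := hT.2 (ezero m n)
  have hd : rdata t = rdata (ezero m n) := (pw_greenR_iff.mp hg).symm
  have hfib : ∀ x, t.fib x = some ⊥ := by
    intro x
    have hx := congrFun hd x
    rw [rdata_ezero] at hx
    rcases rdata_eq_some.mp hx with ⟨f, hf, hpd⟩
    rw [hf, pdom_empty_eq_bot hpd]
  have hbase : ∀ x, (t.base x).isSome := fun x => (t.dom_eq x).mp (by rw [hfib x]; rfl)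
  have h2 : rdata (t * t) = rdata (ezero m n) := by
    funext x
    rw [rdata_ezero, rdata, pw_mul_fib, hfib x]
    obtain ⟨y, hy⟩ := Option.isSome_iff_exists.mp (hbase x)
    rw [hy, Option.bind_some, hfib y]
    simp [Option.map₂, is_bot_mul, pdom_bot]
  have htt : t * t = t := by
    have := hun (t * t) ⟨hT.1 t ht t ht, pw_greenR_iff.mpr h2.symm⟩
    rw [this, hun t ⟨ht, hg⟩]
  have hbb : t.base * t.base = t.base := congrArg PW.base htt
  have hb1 : t.base = 1 := by
    refine PEquiv.ext fun x => ?_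
    obtain ⟨y, hy⟩ := Option.isSome_iff_exists.mp (hbase x)
    rw [hy, is_one_apply, is_idem_fix hbb hy]
  have : t = ezero m n := PW.ext' hb1 (funext hfib)
  exact this ▸ ht

/-! #### Part 1: the base projection is an R-cross-section -/

lemma baseSet_cross {T : Set (PW m n)} (hT : IsRCrossSection T) :
    IsRCrossSection {a : IS n | ∃ u ∈ T, u.base = a} := by
  constructor
  · rintro a ⟨u, hu, rfl⟩ b ⟨v, hv, rfl⟩
    exact ⟨u * v, hT.1 u hu v hv, rfl⟩
  · intro a
    obtain ⟨t, ⟨ht, hg⟩, hun⟩ := hT.2 (zmk a)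
    have hd : rdata (zmk a : PW m n) = rdata t := pw_greenR_iff.mp hg
    have hpdom : pdom a = pdom t.base := by
      ext x
      rw [mem_pdom, mem_pdom]
      exact rdata_base_isSome hd x
    refine ⟨t.base, ⟨⟨t, ht, rfl⟩, is_greenR_iff.mpr hpdom⟩, ?_⟩
    rintro b ⟨⟨v, hv, rfl⟩, hgb⟩
    have hpd : pdom a = pdom v.base := is_greenR_iff.mp hgb
    have hzv : (zmk v.base : PW m n) ∈ T := by
      have := hT.1 _ (ezero_mem hT) _ hv
      rwa [ezero_mul] at this
    have heq : (zmk v.base : PW m n) = t := by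
      apply hun
      refine ⟨hzv, pw_greenR_iff.mpr ?_⟩
      funext x
      rw [rdata_zmk, rdata_zmk]
      have : (a x).isSome ↔ (v.base x).isSome := by
        rw [← mem_pdom, ← mem_pdom, hpd]
      by_cases hx : (a x).isSome
      · rw [if_pos hx, if_pos (this.mp hx)]
      · rw [if_neg hx, if_neg (fun hc => hx (this.mpr hc))]
    have hbb := congrArg PW.base heq
    rw [zmk_base] at hbb
    exact hbb

end Aux

/-! #### Counting fixed points of left multiplication by an idempotent -/

section Counting

variable {m n : ℕ}

/-- Compatibility of an ℛ-class datum (at one coordinate) with that of an idempotent. -/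
def GRel {m : ℕ} (o e : Option (Set (Fin m))) : Prop :=
  o = none ∨ ∃ t s : Set (Fin m), o = some t ∧ e = some s ∧ t ⊆ s

/-- Number of compatible data at one coordinate. -/
def ccard {m : ℕ} (e : Option (Set (Fin m))) : ℕ :=
  Nat.card {o : Option (Set (Fin m)) // GRel o e}

lemma grel_none {o : Option (Set (Fin m))} : GRel o none ↔ o = none := by
  constructor
  · rintro (h | ⟨t, s, -, h, -⟩)
    · exact h
    · cases h
  · exact Or.inl

lemma ccard_none : ccard (none : Option (Set (Fin m))) = 1 := by
  have : Unique {o : Option (Set (Fin m)) // GRel o none} :=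
    { default := ⟨none, Or.inl rfl⟩
      uniq := by
        rintro ⟨o, ho⟩
        exact Subtype.ext (grel_none.mp ho) }
  haveI := this
  exact Nat.card_unique

lemma ccard_some (S : Set (Fin m)) : ccard (some S) = 2 ^ Nat.card S + 1 := by
  classical
  have hpf : ∀ w : Option {T : Set (Fin m) // T ⊆ S},
      GRel (w.map (fun t => t.1)) (some S) := by
    intro w
    cases w with
    | none => exact Or.inl rfl
    | some t => exact Or.inr ⟨t.1, S, rfl, rfl, t.2⟩
  set g : Option {T : Set (Fin m) // T ⊆ S} → {o : Option (Set (Fin m)) // GRel o (some S)} :=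
    fun w => ⟨w.map (fun t => t.1), hpf w⟩ with hgdef
  have hbij : Function.Bijective g := by
    constructor
    · intro w1 w2 hww
      have h := congrArg Subtype.val hww
      exact Option.map_injective Subtype.val_injective h
    · rintro ⟨o, ho⟩
      rcases ho with h | ⟨t, s, h1, h2, h3⟩
      · exact ⟨none, Subtype.ext h.symm⟩
      · have hs : s = S := Option.some_injective _ h2.symm
        subst hs
        exact ⟨some ⟨t, h3⟩, Subtype.ext h1.symm⟩
  have hcardeq := Nat.card_eq_of_bijective g hbij
  rw [ccard, ← hcardeq]
  have h1 : Nat.card (Option {T : Set (Fin m) // T ⊆ S})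
      = Nat.card {T : Set (Fin m) // T ⊆ S} + 1 := by
    rw [Nat.card_eq_fintype_card, Nat.card_eq_fintype_card, Fintype.card_option]
  have h2 : Nat.card {T : Set (Fin m) // T ⊆ S} = 2 ^ Nat.card S := by
    have e1 : {T : Set (Fin m) // T ⊆ S} ≃ Set ↥S :=
      (Equiv.subtypeEquivRight (fun T => Iff.rfl)).trans (Equiv.Set.powerset S)
    rw [Nat.card_congr e1]
    show Nat.card (↥S → Prop) = 2 ^ Nat.card ↥S
    rw [Nat.card_fun]
    congr 1
    rw [Nat.card_congr Equiv.propEquivBool, Nat.card_eq_fintype_card, Fintype.card_bool]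
  rw [h1, h2]

lemma ccard_empty : ccard (some (∅ : Set (Fin m))) = 2 := by
  rw [ccard_some]
  have : Nat.card ↥(∅ : Set (Fin m)) = 0 := Nat.card_of_isEmpty
  rw [this]
  norm_num

/-- The canonical element of `PW` with prescribed ℛ-class data. -/
def dmk (d : Fin n → Option (Set (Fin m))) : PW m n where
  base := pid {x | (d x).isSome}
  fib := fun x => (d x).map (fun S => pid S)
  dom_eq := by
    intro x
    show ((d x).map (fun S => pid S)).isSome ↔ (pid {x | (d x).isSome} x).isSome
    rw [pid_apply]
    simp only [Set.mem_setOf_eq]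
    by_cases h : (d x).isSome
    · rw [if_pos h]
      obtain ⟨S, hS⟩ := Option.isSome_iff_exists.mp h
      rw [hS]
      simp
    · rw [if_neg h, Option.not_isSome_iff_eq_none.mp h]
      simp

lemma rdata_dmk (d : Fin n → Option (Set (Fin m))) : rdata (dmk d) = d := by
  funext x
  rw [rdata]
  show ((d x).map (fun S => pid S)).map pdom = d x
  cases hd : d x with
  | none => rfl
  | some S => simp [pdom_pid]

lemma zbase_idem {z : PW m n} (hzz : z * z = z) : z.base * z.base = z.base :=
  congrArg PW.base hzz

lemma zbase_self {z : PW m n} (hzz : z * z = z) {x : Fin n}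
    (h : (z.base x).isSome) : z.base x = some x := by
  obtain ⟨y, hy⟩ := Option.isSome_iff_exists.mp h
  rw [hy, is_idem_fix (zbase_idem hzz) hy]

lemma zfib_idem {z : PW m n} (hzz : z * z = z) {x : Fin n} {s : IS m}
    (hs : z.fib x = some s) : s * s = s := by
  have hbx : (z.base x).isSome := (z.dom_eq x).mp (by rw [hs]; rfl)
  have hy : z.base x = some x := zbase_self hzz hbx
  have hfx := congrFun (congrArg PW.fib hzz) x
  rw [pw_mul_fib, hs, hy, Option.bind_some, hs] at hfx
  simpa [Option.map₂] using hfx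

lemma zfix_iff {z : PW m n} (hzz : z * z = z) (u : PW m n) :
    z * u = u ↔ ∀ x, GRel (rdata u x) (rdata z x) := by
  constructor
  · intro h x
    cases hf : u.fib x with
    | none => exact Or.inl (rdata_eq_none.mpr hf)
    | some f =>
      have hfx := congrFun (congrArg PW.fib h) x
      rw [pw_mul_fib, hf] at hfx
      cases hzf : z.fib x with
      | none => rw [hzf, Option.map₂_none_left] at hfx; cases hfx
      | some s =>
        rw [hzf] at hfx
        cases hb : (z.base x).bind u.fib with
        | none => rw [hb, Option.map₂_none_right] at hfx; cases hfx
        | some g =>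
          rw [hb] at hfx
          have hsg : s * g = f := by simpa [Option.map₂] using hfx
          refine Or.inr ⟨pdom f, pdom s, rdata_eq_some.mpr ⟨f, hf, rfl⟩,
            rdata_eq_some.mpr ⟨s, hzf, rfl⟩, ?_⟩
          rw [← hsg]
          exact pdom_mul_subset s g
  · intro h
    have hzsome : ∀ x, (u.base x).isSome → z.base x = some x := by
      intro x hx
      have hfs : (u.fib x).isSome := (u.dom_eq x).mpr hx
      obtain ⟨f, hf⟩ := Option.isSome_iff_exists.mp hfs
      rcases h x with h0 | ⟨t, s, ht, hs, hsub⟩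
      · rw [rdata_eq_none.mp h0] at hf; cases hf
      · rcases rdata_eq_some.mp hs with ⟨s', hs', -⟩
        have : (z.base x).isSome := (z.dom_eq x).mp (by rw [hs']; rfl)
        exact zbase_self hzz this
    refine PW.ext' ?_ ?_
    · refine PEquiv.ext fun x => ?_
      rw [pw_mul_base, is_mul_apply]
      cases hb : u.base x with
      | none =>
        cases hz : z.base x with
        | none => rw [Option.bind_none]
        | some y =>
          obtain rfl : y = x := is_idem_fix (zbase_idem hzz) hz
          rw [Option.bind_some, hb]
      | some w =>
        rw [hzsome x (by rw [hb]; rfl), Option.bind_some, hb]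
    · funext x
      rw [pw_mul_fib]
      cases hf : u.fib x with
      | none =>
        cases hz : z.base x with
        | none =>
          rw [fib_none_iff.mpr hz, Option.map₂_none_left]
        | some y =>
          obtain rfl : y = x := is_idem_fix (zbase_idem hzz) hz
          rw [Option.bind_some, hf, Option.map₂_none_right]
      | some f =>
        rcases h x with h0 | ⟨t, s, ht, hs, hsub⟩
        · rw [rdata_eq_none.mp h0] at hf; cases hf
        · rcases rdata_eq_some.mp hs with ⟨s', hs', hps'⟩
          have hpf : pdom f = t := by
            rcases rdata_eq_some.mp ht with ⟨f2, hf2, hpf2⟩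
            rw [hf] at hf2
            cases hf2
            exact hpf2
          have hbx : (u.base x).isSome := (u.dom_eq x).mp (by rw [hf]; rfl)
          rw [hzsome x hbx, Option.bind_some, hf, hs']
          have hmul : s' * f = f := by
            apply is_idem_mul_eq (zfib_idem hzz hs')
            rw [hpf, hps']
            exact hsub
          simp [Option.map₂, hmul]

lemma card_fix {T : Set (PW m n)} (hT : IsRCrossSection T) {z : PW m n} (hzz : z * z = z) :
    Nat.card {u : PW m n // u ∈ T ∧ z * u = u} = ∏ x : Fin n, ccard (rdata z x) := by
  classical
  have hbij : Function.Bijective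
      (fun u : {u : PW m n // u ∈ T ∧ z * u = u} =>
        (⟨rdata u.1, (zfix_iff hzz u.1).mp u.2.2⟩ :
          {d : Fin n → Option (Set (Fin m)) // ∀ x, GRel (d x) (rdata z x)})) := by
    constructor
    · rintro ⟨u, hu, hzu⟩ ⟨v, hv, hzv⟩ h
      simp only [Subtype.mk.injEq] at h ⊢
      exact cs_unique hT hu hv (pw_greenR_iff.mpr h)
    · rintro ⟨d, hd⟩
      obtain ⟨t, ht, hrt⟩ := cs_rep hT (dmk d)
      have hrd : rdata t = d := by rw [hrt, rdata_dmk]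
      refine ⟨⟨t, ht, (zfix_iff hzz t).mpr (by rw [hrd]; exact hd)⟩, ?_⟩
      exact Subtype.ext hrd
  rw [Nat.card_eq_of_bijective _ hbij,
    Nat.card_congr (Equiv.subtypePiEquivPi (p := fun x o => GRel o (rdata z x))),
    Nat.card_pi]
  rfl

lemma eq_ezero_of_card {z : PW m n} (hzz : z * z = z)
    (hc : ∏ x : Fin n, ccard (rdata z x) = 2 ^ n) : z = ezero m n := by
  have step1 : ∀ x : Fin n, ccard (rdata z x) = 1 ∨ rdata z x = some (∅ : Set (Fin m)) := by
    intro x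
    have hdvd : ccard (rdata z x) ∣ 2 ^ n := by
      rw [← hc]
      exact Finset.dvd_prod_of_mem _ (Finset.mem_univ x)
    cases hr : rdata z x with
    | none => left; rw [ccard_none]
    | some S =>
      by_cases hS : S = ∅
      · right; rw [hS]
      · exfalso
        rw [hr, ccard_some] at hdvd
        have hSne : S.Nonempty := Set.nonempty_iff_ne_empty.mpr hS
        have hpos : 0 < Nat.card ↥S := by
          have : Nonempty ↥S := hSne.to_subtype
          exact Nat.card_pos
        obtain ⟨j, hj, hcj⟩ := (Nat.dvd_prime_pow Nat.prime_two).mp hdvd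
        set kk := Nat.card ↥S with hkk
        have hk1 : 1 ≤ kk := hpos
        have heven : ∃ a, 2 ^ kk = 2 * a := ⟨2 ^ (kk - 1), by
          rw [← pow_succ']
          congr 1
          omega⟩
        obtain ⟨a, ha⟩ := heven
        cases j with
        | zero =>
          rw [pow_zero] at hcj
          have hp : 0 < 2 ^ kk := by positivity
          omega
        | succ j' =>
          have heven2 : ∃ b, 2 ^ (j' + 1) = 2 * b := ⟨2 ^ j', by rw [pow_succ']⟩
          obtain ⟨b, hb⟩ := heven2
          omega
  have key : ∀ x : Fin n, rdata z x = some (∅ : Set (Fin m)) := by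
    intro x
    by_contra hne
    have h1 : ccard (rdata z x) = 1 := (step1 x).resolve_right hne
    have hle : ∀ y ∈ Finset.univ.erase x, ccard (rdata z y) ≤ 2 := by
      intro y _
      rcases step1 y with h | h
      · omega
      · rw [h, ccard_empty]
    have hbound : (∏ y : Fin n, ccard (rdata z y)) ≤ 2 ^ (n - 1) := by
      calc (∏ y : Fin n, ccard (rdata z y))
          = ccard (rdata z x) * ∏ y ∈ Finset.univ.erase x, ccard (rdata z y) :=
            (Finset.mul_prod_erase _ _ (Finset.mem_univ x)).symm
        _ ≤ 1 * 2 ^ (Finset.univ.erase x).card := by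
            exact Nat.mul_le_mul (le_of_eq h1) (Finset.prod_le_pow_card _ _ _ hle)
        _ = 2 ^ (n - 1) := by
            rw [one_mul, Finset.card_erase_of_mem (Finset.mem_univ x),
              Finset.card_univ, Fintype.card_fin]
    rw [hc] at hbound
    have hn : 0 < n := x.pos
    have : 2 ^ (n - 1) < 2 ^ n := Nat.pow_lt_pow_right (by norm_num) (by omega)
    omega
  have hfib : ∀ x, z.fib x = some ⊥ := by
    intro x
    rcases rdata_eq_some.mp (key x) with ⟨s, hs, hps⟩
    rw [hs, pdom_empty_eq_bot hps]
  have hbase : z.base = 1 := by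
    refine PEquiv.ext fun x => ?_
    have : (z.base x).isSome := (z.dom_eq x).mp (by rw [hfib x]; rfl)
    rw [zbase_self hzz this, is_one_apply]
  exact PW.ext' hbase (funext hfib)

end Counting

/-- for an R-cross-section `R'` of `IS m ≀_p IS n`, the set
`R'_1 = {a : (f,a) ∈ R'}` is an R-cross-section of `IS n`; moreover
`e' R' = {(0̄|_{dom a}, a) : a ∈ R'_1}`, and any isomorphism `φ : R' → R''` induces an
isomorphism `φ₁ : R'_1 → R''_1` determined by `(0̄|_{dom φ₁(a)}, φ₁(a)) = φ((0̄|_{dom a}, a))`. -/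
theorem base_projection_rcross (m n : ℕ) (R' : Set (PW m n)) (hR' : IsRCrossSection R') :
    IsRCrossSection {a : IS n | ∃ u ∈ R', u.base = a} ∧
    ({w : PW m n | ∃ u ∈ R', w = ezero m n * u} =
      {w : PW m n | (∃ u ∈ R', u.base = w.base) ∧
        ∀ x, w.fib x = if (w.base x).isSome then some (⊥ : IS m) else none}) ∧
    (∀ (R'' : Set (PW m n)) (φ : PW m n → PW m n),
      IsRCrossSection R'' → IsSemiIso R' R'' φ →
      ∃ φ₁ : IS n → IS n,
        IsSemiIso {a : IS n | ∃ u ∈ R', u.base = a} {a : IS n | ∃ u ∈ R'', u.base = a} φ₁ ∧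
        ∀ u ∈ R', (∀ x, u.fib x = if (u.base x).isSome then some (⊥ : IS m) else none) →
          (φ u).base = φ₁ u.base ∧
          ∀ x, (φ u).fib x = if ((φ u).base x).isSome then some (⊥ : IS m) else none) := by
  refine ⟨baseSet_cross hR', ?_, ?_⟩
  · -- Part 2: e'R' = zero-fibered elements with base in R'₁
    ext w
    simp only [Set.mem_setOf_eq]
    constructor
    · rintro ⟨u, hu, rfl⟩
      rw [ezero_mul]
      exact ⟨⟨u, hu, rfl⟩, fun x => rfl⟩
    · rintro ⟨⟨u, hu, hub⟩, hfib⟩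
      refine ⟨u, hu, ?_⟩
      rw [ezero_mul]
      symm
      refine PW.ext' hub ?_
      funext x
      rw [zmk_fib, hub, ← hfib x]
  · -- Part 3: induced isomorphism on base cross-sections
    intro R'' φ hR'' hφ
    have he'R : ezero m n ∈ R' := ezero_mem hR'
    have he''R : ezero m n ∈ R'' := ezero_mem hR''
    have hzz : φ (ezero m n) * φ (ezero m n) = φ (ezero m n) := by
      rw [← hφ.2 _ he'R _ he'R, ezero_idem]
    have hcard : Nat.card {v : PW m n // v ∈ R'' ∧ φ (ezero m n) * v = v}
        = Nat.card {u : PW m n // u ∈ R' ∧ ezero m n * u = u} := by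
      symm
      apply Nat.card_eq_of_bijective
        (fun u : {u : PW m n // u ∈ R' ∧ ezero m n * u = u} =>
          (⟨φ u.1, hφ.1.1 u.2.1, by rw [← hφ.2 _ he'R _ u.2.1, u.2.2]⟩ :
            {v : PW m n // v ∈ R'' ∧ φ (ezero m n) * v = v}))
      constructor
      · rintro ⟨u, hu, hu2⟩ ⟨v, hv, hv2⟩ h
        simp only [Subtype.mk.injEq] at h ⊢
        exact hφ.1.2.1 hu hv h
      · rintro ⟨v, hv, hv2⟩
        obtain ⟨u, hu, rfl⟩ := hφ.1.2.2 hv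
        refine ⟨⟨u, hu, ?_⟩, rfl⟩
        apply hφ.1.2.1 (hR'.1 _ he'R _ hu) hu
        rw [hφ.2 _ he'R _ hu, hv2]
    have h2n : ∏ x : Fin n, ccard (rdata (φ (ezero m n)) x) = 2 ^ n := by
      rw [← card_fix hR'' hzz, hcard, card_fix hR' ezero_idem]
      calc ∏ x : Fin n, ccard (rdata (ezero m n) x)
          = ∏ _x : Fin n, 2 :=
            Finset.prod_congr rfl (fun x _ => by rw [rdata_ezero, ccard_empty])
        _ = 2 ^ n := by rw [Finset.prod_const, Finset.card_univ, Fintype.card_fin]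
    have hphie : φ (ezero m n) = ezero m n := eq_ezero_of_card hzz h2n
    have hzmem : ∀ a : IS n, (∃ u ∈ R', u.base = a) → (zmk a : PW m n) ∈ R' := by
      rintro a ⟨u, hu, rfl⟩
      have := hR'.1 _ he'R _ hu
      rwa [ezero_mul] at this
    have hzmem'' : ∀ a : IS n, (∃ u ∈ R'', u.base = a) → (zmk a : PW m n) ∈ R'' := by
      rintro a ⟨u, hu, rfl⟩
      have := hR''.1 _ he''R _ hu
      rwa [ezero_mul] at this
    have hefix : ∀ a : IS n, ezero m n * (zmk a : PW m n) = zmk a := fun a => by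
      rw [ezero_mul]
      rfl
    refine ⟨fun a => if h : ∃ u ∈ R', u.base = a then (φ (zmk a)).base else a,
      ⟨⟨?_, ?_, ?_⟩, ?_⟩, ?_⟩
    · -- MapsTo
      intro a ha
      have ha' : ∃ u ∈ R', u.base = a := ha
      simp only [Set.mem_setOf_eq, dif_pos ha']
      exact ⟨φ (zmk a), hφ.1.1 (hzmem a ha'), rfl⟩
    · -- InjOn
      intro a ha b hb heq
      have ha' : ∃ u ∈ R', u.base = a := ha
      have hb' : ∃ u ∈ R', u.base = b := hb
      simp only [dif_pos ha', dif_pos hb'] at heq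
      have hfa : ezero m n * φ (zmk a) = φ (zmk a) := by
        rw [← hphie, ← hφ.2 _ he'R _ (hzmem a ha'), hefix]
      have hfb : ezero m n * φ (zmk b) = φ (zmk b) := by
        rw [← hphie, ← hφ.2 _ he'R _ (hzmem b hb'), hefix]
      rw [ezero_mul] at hfa hfb
      have hab : φ (zmk a) = φ (zmk b) := by
        rw [← hfa, ← hfb, heq]
      have hfin := congrArg PW.base (hφ.1.2.1 (hzmem a ha') (hzmem b hb') hab)
      rw [zmk_base, zmk_base] at hfin
      exact hfin
    · -- SurjOn
      rintro b ⟨v, hv, rfl⟩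
      have hzb : (zmk v.base : PW m n) ∈ R'' := hzmem'' _ ⟨v, hv, rfl⟩
      obtain ⟨u, hu, hub⟩ := hφ.1.2.2 hzb
      have hufix : ezero m n * u = u := by
        apply hφ.1.2.1 (hR'.1 _ he'R _ hu) hu
        rw [hφ.2 _ he'R _ hu, hphie, hub, hefix]
      have huz : zmk u.base = u := by
        have h := hufix
        rwa [ezero_mul] at h
      refine ⟨u.base, ⟨u, hu, rfl⟩, ?_⟩
      have hcond : ∃ w ∈ R', w.base = u.base := ⟨u, hu, rfl⟩
      simp only [dif_pos hcond]
      rw [huz, hub]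
      exact zmk_base v.base
    · -- multiplicativity
      intro a ha b hb
      have ha' : ∃ u ∈ R', u.base = a := ha
      have hb' : ∃ u ∈ R', u.base = b := hb
      have hab : ∃ u ∈ R', u.base = a * b := by
        obtain ⟨u, hu, rfl⟩ := ha'
        obtain ⟨v, hv, rfl⟩ := hb'
        exact ⟨u * v, hR'.1 u hu v hv, rfl⟩
      simp only [dif_pos hab, dif_pos ha', dif_pos hb']
      rw [← zmk_mul_zmk, hφ.2 _ (hzmem a ha') _ (hzmem b hb')]
      rfl
    · -- compatibility on zero-fibered elements
      intro u hu hufib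
      have hufix : ezero m n * u = u := efix_iff.mpr hufib
      have huz : zmk u.base = u := by
        have h := hufix
        rwa [ezero_mul] at h
      constructor
      · have hcond : ∃ w ∈ R', w.base = u.base := ⟨u, hu, rfl⟩
        simp only [dif_pos hcond]
        rw [huz]
      · apply efix_iff.mp
        rw [← hphie, ← hφ.2 _ he'R _ hu, hufix]

end ISW
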